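/- arXiv:2206.09172 — 7 statements merged into one kernel-verified Lean document; each statement's English description precedes it below -/
import Mathlib

section
/- (Singularity criterion of type B, k < n; the key step of the main theorem for B_n/P(α_k).) Let n ≥ 2 and 1 ≤ k ≤ n−1, and let a_1,…,a_n be nonnegative integers. Then for every integer t, there exists a positive root α ∈ Φ⁺_B with ⟨w(t), α⟩ = 0 if and only if t belongs to the step-matrix entry set S^B_{k,a}. -/
open Finset

/-- The positive roots of type `Bₙ`: `eₚ+e_q`, `eₚ-e_q` (`p<q`) and `eₚ`. -/
def PhiB (n : ℕ) : Set (Fin n → ℝ) :=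
  {α | ∃ p q : Fin n, p < q ∧
      α = fun i => (if i = p then (1:ℝ) else 0) + (if i = q then 1 else 0)} ∪
  {α | ∃ p q : Fin n, p < q ∧
      α = fun i => (if i = p then (1:ℝ) else 0) - (if i = q then 1 else 0)} ∪
  {α | ∃ p : Fin n, α = fun i => if i = p then (1:ℝ) else 0}

/-- Standard inner product on `ℝⁿ`. -/
noncomputable def ip (n : ℕ) (v w : Fin n → ℝ) : ℝ := ∑ i, v i * w i

/-- The coordinate form of the weight `λ+ρ-tλ_k` for type `Bₙ`, `k < n`
(coordinates are indexed one-based). -/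
noncomputable def wB (n k : ℕ) (a : ℕ → ℤ) (t : ℤ) : Fin n → ℝ := fun i =>
  (∑ u ∈ Icc (i.val + 1) (n - 1), (a u : ℝ)) + ((a n : ℝ) + 1) / 2
    + ((n : ℝ) - (i.val + 1)) - (if i.val + 1 ≤ k then (t : ℝ) else 0)

/-- The step-matrix entry set `S^B_{k,a}`. -/
def SB (n k : ℕ) (a : ℕ → ℤ) : Set ℚ :=
  {x | ∃ i j : ℕ, 1 ≤ i ∧ i ≤ k ∧ 1 ≤ j ∧ j ≤ n - k ∧
    x = (∑ u ∈ Icc (k + 1 - i) (k + j - 1), (a u : ℚ)) + i + j - 1} ∪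
  {x | ∃ i j : ℕ, 1 ≤ i ∧ i ≤ k ∧ 1 ≤ j ∧ j ≤ n - k ∧
    x = (∑ u ∈ Icc (k + 1 - i) (n - 1), (a u : ℚ))
      + (∑ u ∈ Icc (n + 1 - j) (n - 1), (a u : ℚ)) + (a n : ℚ)
      + n - k + i + j - 1} ∪
  {x | ∃ i j : ℕ, 1 ≤ i ∧ i ≤ j ∧ j ≤ k ∧
    x = ((∑ u ∈ Icc (k + 1 - i) (n - 1), (a u : ℚ))
      + (∑ u ∈ Icc (k + 1 - j) (n - 1), (a u : ℚ)) + (a n : ℚ)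
      + i + j + 2 * n - 2 * k - 1) / 2}

lemma ip_single {n : ℕ} (w : Fin n → ℝ) (p : Fin n) :
    ip n w (fun i => if i = p then (1:ℝ) else 0) = w p := by
  simp [ip]

lemma ip_add {n : ℕ} (w : Fin n → ℝ) (p q : Fin n) :
    ip n w (fun i => (if i = p then (1:ℝ) else 0) + (if i = q then 1 else 0)) = w p + w q := by
  simp [ip, mul_add, Finset.sum_add_distrib]

lemma ip_sub {n : ℕ} (w : Fin n → ℝ) (p q : Fin n) :
    ip n w (fun i => (if i = p then (1:ℝ) else 0) - (if i = q then 1 else 0)) = w p - w q := by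
  simp [ip, mul_sub, Finset.sum_sub_distrib]

lemma exists_root_iff {n : ℕ} (w : Fin n → ℝ) :
    (∃ α ∈ PhiB n, ip n w α = 0) ↔
      (∃ p q : Fin n, p < q ∧ w p + w q = 0) ∨
      (∃ p q : Fin n, p < q ∧ w p - w q = 0) ∨
      (∃ p : Fin n, w p = 0) := by
  constructor
  · rintro ⟨α, hα, hip⟩
    rcases hα with (⟨p, q, hpq, rfl⟩ | ⟨p, q, hpq, rfl⟩) | ⟨p, rfl⟩
    · exact Or.inl ⟨p, q, hpq, by rwa [ip_add] at hip⟩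
    · exact Or.inr (Or.inl ⟨p, q, hpq, by rwa [ip_sub] at hip⟩)
    · exact Or.inr (Or.inr ⟨p, by rwa [ip_single] at hip⟩)
  · rintro (⟨p, q, hpq, h⟩ | ⟨p, q, hpq, h⟩ | ⟨p, h⟩)
    · exact ⟨_, Or.inl (Or.inl ⟨p, q, hpq, rfl⟩), by rw [ip_add]; exact h⟩
    · exact ⟨_, Or.inl (Or.inr ⟨p, q, hpq, rfl⟩), by rw [ip_sub]; exact h⟩
    · exact ⟨_, Or.inr ⟨p, rfl⟩, by rw [ip_single]; exact h⟩

lemma wB_apply {n k : ℕ} (a : ℕ → ℤ) (t : ℤ) (p : Fin n) :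
    wB n k a t p = (∑ u ∈ Ioc p.val (n - 1), (a u : ℝ)) + ((a n : ℝ) + 1) / 2
      + ((n : ℝ) - (p.val + 1)) - (if p.val + 1 ≤ k then (t : ℝ) else 0) := by
  rw [wB, Finset.Icc_add_one_left_eq_Ioc]

lemma sum_Ioc_split (f : ℕ → ℝ) {a b c : ℕ} (h1 : a ≤ b) (h2 : b ≤ c) :
    ∑ u ∈ Ioc a c, f u = (∑ u ∈ Ioc a b, f u) + ∑ u ∈ Ioc b c, f u :=
  (Finset.sum_Ioc_consecutive f h1 h2).symm

lemma sum_a_nonneg {n : ℕ} (a : ℕ → ℤ) (ha : ∀ u, 1 ≤ u → u ≤ n → 0 ≤ a u)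
    (b c : ℕ) (hc : c ≤ n) : (0:ℝ) ≤ ∑ u ∈ Ioc b c, (a u : ℝ) := by
  refine Finset.sum_nonneg fun u hu => ?_
  rw [Finset.mem_Ioc] at hu
  have := ha u (by omega) (by omega)
  exact_mod_cast this

lemma wB_pos {n k : ℕ} (a : ℕ → ℤ) (ha : ∀ u, 1 ≤ u → u ≤ n → 0 ≤ a u) (t : ℤ)
    (p : Fin n) (hp : k < p.val + 1) : 0 < wB n k a t p := by
  rw [wB_apply, if_neg (by omega)]
  have h1 := sum_a_nonneg a ha p.val (n-1) (by omega)
  have h2 : (0:ℝ) ≤ (a n : ℝ) := by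
    have := ha n (by omega) le_rfl; exact_mod_cast this
  have h3 : (p.val : ℝ) + 1 ≤ n := by exact_mod_cast p.isLt
  linarith

lemma wB_lt {n k : ℕ} (a : ℕ → ℤ) (ha : ∀ u, 1 ≤ u → u ≤ n → 0 ≤ a u) (t : ℤ)
    (p q : Fin n) (hpq : p < q) (hside : q.val + 1 ≤ k ∨ k < p.val + 1) :
    wB n k a t q < wB n k a t p := by
  have hq : q.val ≤ n - 1 := by have := q.isLt; omega
  rw [wB_apply, wB_apply]
  rw [sum_Ioc_split (fun u => (a u : ℝ)) (le_of_lt hpq) hq]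
  have h1 := sum_a_nonneg a ha p.val q.val (by omega)
  have h2 : (p.val : ℝ) < q.val := by exact_mod_cast hpq
  rcases hside with hs | hs
  · rw [if_pos (by omega : p.val + 1 ≤ k), if_pos hs]; linarith
  · rw [if_neg (by omega : ¬ p.val + 1 ≤ k), if_neg (by omega : ¬ q.val + 1 ≤ k)]; linarith


/-- Singularity criterion of type `B`, `k < n`: `λ+ρ-tλ_k` is singular iff `t` is an
entry of the step matrix `T^B_{k,λ}`. -/
theorem singular_criterion_B_lt (n k : ℕ) (hn : 2 ≤ n) (hk1 : 1 ≤ k) (hkn : k ≤ n - 1)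
    (a : ℕ → ℤ) (ha : ∀ u, 1 ≤ u → u ≤ n → 0 ≤ a u) (t : ℤ) :
    (∃ α ∈ PhiB n, ip n (wB n k a t) α = 0) ↔ (t : ℚ) ∈ SB n k a := by
  have hkn2 : k < n := by omega
  rw [exists_root_iff]
  constructor
  · rintro (⟨p, q, hpq, h⟩ | ⟨p, q, hpq, h⟩ | ⟨p, h⟩)
    · -- w p + w q = 0
      have hpq' : p.val < q.val := hpq
      have hp : p.val + 1 ≤ k := by
        by_contra hp
        have h1 := wB_pos (k := k) a ha t p (by omega)
        have h2 := wB_pos (k := k) a ha t q (by omega)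
        linarith
      rw [wB_apply, wB_apply, if_pos hp] at h
      by_cases hq : q.val + 1 ≤ k
      · -- third set, i = k - q.val, j = k - p.val
        rw [if_pos hq] at h
        refine Or.inr ⟨k - q.val, k - p.val, by omega, by omega, by omega, ?_⟩
        rw [show k + 1 - (k - q.val) = q.val + 1 from by omega,
            show k + 1 - (k - p.val) = p.val + 1 from by omega,
            Finset.Icc_add_one_left_eq_Ioc, Finset.Icc_add_one_left_eq_Ioc]
        apply Rat.cast_injective (α := ℝ)
        push_cast [Nat.cast_sub (show q.val ≤ k by omega), Nat.cast_sub (show p.val ≤ k by omega)]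
        linarith
      · -- second set, i = k - p.val, j = n - q.val
        rw [if_neg hq] at h
        have hqn : q.val < n := q.isLt
        refine Or.inl (Or.inr ⟨k - p.val, n - q.val, by omega, by omega, by omega, by omega, ?_⟩)
        rw [show k + 1 - (k - p.val) = p.val + 1 from by omega,
            show n + 1 - (n - q.val) = q.val + 1 from by omega,
            Finset.Icc_add_one_left_eq_Ioc, Finset.Icc_add_one_left_eq_Ioc]
        apply Rat.cast_injective (α := ℝ)
        push_cast [Nat.cast_sub (show p.val ≤ k by omega), Nat.cast_sub (show q.val ≤ n by omega)]
        linarith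
    · -- w p - w q = 0
      have hpq' : p.val < q.val := hpq
      have hqn : q.val < n := q.isLt
      have hp : p.val + 1 ≤ k := by
        by_contra hp
        have := wB_lt (k := k) a ha t p q hpq (Or.inr (by omega))
        linarith
      have hq : ¬ q.val + 1 ≤ k := by
        intro hq
        have := wB_lt (k := k) a ha t p q hpq (Or.inl hq)
        linarith
      rw [wB_apply, wB_apply, if_pos hp, if_neg hq,
          sum_Ioc_split (fun u => (a u : ℝ)) (le_of_lt hpq) (by omega : q.val ≤ n - 1)] at h
      refine Or.inl (Or.inl ⟨k - p.val, q.val + 1 - k, by omega, by omega, by omega, by omega, ?_⟩)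
      rw [show k + 1 - (k - p.val) = p.val + 1 from by omega,
          show k + (q.val + 1 - k) - 1 = q.val from by omega, Finset.Icc_add_one_left_eq_Ioc]
      apply Rat.cast_injective (α := ℝ)
      push_cast [Nat.cast_sub (show p.val ≤ k by omega), Nat.cast_sub (show k ≤ q.val + 1 by omega)]
      linarith
    · -- w p = 0
      have hp : p.val + 1 ≤ k := by
        by_contra hp
        have := wB_pos (k := k) a ha t p (by omega)
        linarith
      rw [wB_apply, if_pos hp] at h
      refine Or.inr ⟨k - p.val, k - p.val, by omega, le_rfl, by omega, ?_⟩
      rw [show k + 1 - (k - p.val) = p.val + 1 from by omega, Finset.Icc_add_one_left_eq_Ioc]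
      apply Rat.cast_injective (α := ℝ)
      push_cast [Nat.cast_sub (show p.val ≤ k by omega)]
      linarith
  · rintro ((⟨i, j, h1, h2, h3, h4, hx⟩ | ⟨i, j, h1, h2, h3, h4, hx⟩) | ⟨i, j, h1, h2, h3, hx⟩)
    · -- first set: difference root
      refine Or.inr (Or.inl ⟨⟨k - i, by omega⟩, ⟨k + j - 1, by omega⟩, Fin.mk_lt_mk.2 (by omega), ?_⟩)
      rw [show k + 1 - i = (k - i) + 1 from by omega, Finset.Icc_add_one_left_eq_Ioc] at hx
      have hxR : (t : ℝ) = (∑ u ∈ Ioc (k - i) (k + j - 1), (a u : ℝ)) + i + j - 1 := by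
        exact_mod_cast congrArg (Rat.cast (K := ℝ)) hx
      rw [wB_apply, wB_apply]
      simp only [Fin.val_mk]
      rw [if_pos (by omega : k - i + 1 ≤ k), if_neg (by omega : ¬ k + j - 1 + 1 ≤ k),
          sum_Ioc_split (fun u => (a u : ℝ)) (by omega : k - i ≤ k + j - 1)
            (by omega : k + j - 1 ≤ n - 1)]
      push_cast [Nat.cast_sub (show i ≤ k by omega), Nat.cast_sub (show 1 ≤ k + j by omega)]
      linarith
    · -- second set: sum root, p = k-i, q = n-j
      refine Or.inl ⟨⟨k - i, by omega⟩, ⟨n - j, by omega⟩, Fin.mk_lt_mk.2 (by omega), ?_⟩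
      rw [show k + 1 - i = (k - i) + 1 from by omega,
          show n + 1 - j = (n - j) + 1 from by omega, Finset.Icc_add_one_left_eq_Ioc, Finset.Icc_add_one_left_eq_Ioc] at hx
      have hxR : (t : ℝ) = (∑ u ∈ Ioc (k - i) (n - 1), (a u : ℝ))
          + (∑ u ∈ Ioc (n - j) (n - 1), (a u : ℝ)) + (a n : ℝ) + n - k + i + j - 1 := by
        exact_mod_cast congrArg (Rat.cast (K := ℝ)) hx
      rw [wB_apply, wB_apply]
      simp only [Fin.val_mk]
      rw [if_pos (by omega : k - i + 1 ≤ k), if_neg (by omega : ¬ n - j + 1 ≤ k)]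
      push_cast [Nat.cast_sub (show i ≤ k by omega), Nat.cast_sub (show j ≤ n by omega)]
      linarith
    · rw [show k + 1 - i = (k - i) + 1 from by omega,
          show k + 1 - j = (k - j) + 1 from by omega, Finset.Icc_add_one_left_eq_Ioc, Finset.Icc_add_one_left_eq_Ioc] at hx
      have hxR : (t : ℝ) = ((∑ u ∈ Ioc (k - i) (n - 1), (a u : ℝ))
          + (∑ u ∈ Ioc (k - j) (n - 1), (a u : ℝ)) + (a n : ℝ)
          + i + j + 2 * n - 2 * k - 1) / 2 := by
        exact_mod_cast congrArg (Rat.cast (K := ℝ)) hx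
      by_cases hij : i = j
      · -- single root
        subst hij
        refine Or.inr (Or.inr ⟨⟨k - i, by omega⟩, ?_⟩)
        rw [wB_apply]
        simp only [Fin.val_mk]
        rw [if_pos (by omega : k - i + 1 ≤ k)]
        push_cast [Nat.cast_sub (show i ≤ k by omega)]
        linarith
      · -- sum root, p = k-j, q = k-i
        refine Or.inl ⟨⟨k - j, by omega⟩, ⟨k - i, by omega⟩, Fin.mk_lt_mk.2 (by omega), ?_⟩
        rw [wB_apply, wB_apply]
        simp only [Fin.val_mk]
        rw [if_pos (by omega : k - j + 1 ≤ k), if_pos (by omega : k - i + 1 ≤ k)]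
        push_cast [Nat.cast_sub (show i ≤ k by omega), Nat.cast_sub (show j ≤ k by omega)]
        linarith
end

section
/- (Singularity criterion of type C, k < n; the key step of the main theorem for C_n/P(α_k).) Let n ≥ 2 and 1 ≤ k ≤ n−1, and let a_1,…,a_n be nonnegative integers. Then for every integer t, there exists a positive root α ∈ Φ⁺_C with ⟨w(t), α⟩ = 0 if and only if t belongs to the step-matrix entry set S^C_{k,a}. -/
open Finset

/-- The positive roots of type `Cₙ`: `eₚ+e_q` (`p≤q`) and `eₚ-e_q` (`p<q`). -/
def PhiC (n : ℕ) : Set (Fin n → ℝ) :=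
  {α | ∃ p q : Fin n, p ≤ q ∧
      α = fun i => (if i = p then (1:ℝ) else 0) + (if i = q then 1 else 0)} ∪
  {α | ∃ p q : Fin n, p < q ∧
      α = fun i => (if i = p then (1:ℝ) else 0) - (if i = q then 1 else 0)}

/-- The coordinate form of the weight `λ+ρ-tλ_k` for type `Cₙ`, `k < n`
(coordinates are indexed one-based). -/
noncomputable def wC (n k : ℕ) (a : ℕ → ℤ) (t : ℤ) : Fin n → ℝ := fun i =>
  (∑ u ∈ Icc (i.val + 1) (n - 1), (a u : ℝ)) + (a n : ℝ) + 1
    + ((n : ℝ) - (i.val + 1)) - (if i.val + 1 ≤ k then (t : ℝ) else 0)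

/-- The step-matrix entry set `S^C_{k,a}`. -/
def SC (n k : ℕ) (a : ℕ → ℤ) : Set ℚ :=
  {x | ∃ i j : ℕ, 1 ≤ i ∧ i ≤ k ∧ 1 ≤ j ∧ j ≤ n - k ∧
    x = (∑ u ∈ Icc (k + 1 - i) (k + j - 1), (a u : ℚ)) + i + j - 1} ∪
  {x | ∃ i j : ℕ, 1 ≤ i ∧ i ≤ k ∧ 1 ≤ j ∧ j ≤ n - k ∧
    x = (∑ u ∈ Icc (k + 1 - i) (n - 1), (a u : ℚ))
      + (∑ u ∈ Icc (n + 1 - j) (n - 1), (a u : ℚ)) + 2 * (a n : ℚ)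
      + n - k + i + j} ∪
  {x | ∃ i j : ℕ, 1 ≤ i ∧ i ≤ j ∧ j ≤ k ∧
    x = ((∑ u ∈ Icc (k + 1 - i) (n - 1), (a u : ℚ))
      + (∑ u ∈ Icc (k + 1 - j) (n - 1), (a u : ℚ)) + 2 * (a n : ℚ)
      + i + j + 2 * n - 2 * k) / 2}

/-! ### Auxiliary lemmas -/

lemma ip_sum_root (n : ℕ) (w : Fin n → ℝ) (p q : Fin n) :
    ip n w (fun i => (if i = p then (1:ℝ) else 0) + (if i = q then 1 else 0)) = w p + w q := by
  simp [ip, mul_add, Finset.sum_add_distrib, mul_ite, mul_one, mul_zero]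

lemma ip_diff_root (n : ℕ) (w : Fin n → ℝ) (p q : Fin n) :
    ip n w (fun i => (if i = p then (1:ℝ) else 0) - (if i = q then 1 else 0)) = w p - w q := by
  simp [ip, mul_sub, Finset.sum_sub_distrib, mul_ite, mul_one, mul_zero]

/-- One-based rational version of the weight coordinates. -/
def Wq (n k : ℕ) (a : ℕ → ℤ) (t : ℤ) (m : ℕ) : ℚ :=
  (∑ u ∈ Ico m n, (a u : ℚ)) + (a n : ℚ) + 1 + ((n : ℚ) - m)
    - (if m ≤ k then (t : ℚ) else 0)

lemma Icc_pred (n c : ℕ) (hn : 1 ≤ n) : Icc c (n - 1) = Ico c n := by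
  rw [← Finset.Ico_add_one_right_eq_Icc]; congr 1; omega

lemma wC_cast (n k : ℕ) (hn : 1 ≤ n) (a : ℕ → ℤ) (t : ℤ) (i : Fin n) :
    wC n k a t i = ((Wq n k a t (i.val + 1) : ℚ) : ℝ) := by
  simp only [wC, Wq, Icc_pred n _ hn]
  push_cast
  split <;> push_cast <;> ring

set_option maxHeartbeats 1600000 in
/-- Singularity criterion of type `C`, `k < n`: `λ+ρ-tλ_k` is singular iff `t` is an
entry of the step matrix `T^C_{k,λ}`. -/
theorem singular_criterion_C_lt (n k : ℕ) (hn : 2 ≤ n) (hk1 : 1 ≤ k) (hkn : k ≤ n - 1)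
    (a : ℕ → ℤ) (ha : ∀ u, 1 ≤ u → u ≤ n → 0 ≤ a u) (t : ℤ) :
    (∃ α ∈ PhiC n, ip n (wC n k a t) α = 0) ↔ (t : ℚ) ∈ SC n k a := by
  have hn1 : 1 ≤ n := by omega
  have hkn' : k < n := by omega
  set F : ℕ → ℚ := fun m => ∑ u ∈ Ico m n, (a u : ℚ) with hF
  -- basic facts
  have hFnonneg : ∀ m, 1 ≤ m → 0 ≤ F m := by
    intro m hm
    refine Finset.sum_nonneg fun u hu => ?_
    rw [mem_Ico] at hu
    exact_mod_cast ha u (by omega) (by omega)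
  have hFsplit : ∀ p q, p ≤ q → q ≤ n → F p = (∑ u ∈ Ico p q, (a u : ℚ)) + F q := by
    intro p q h1 h2
    exact (Finset.sum_Ico_consecutive _ h1 h2).symm
  have han : (0:ℚ) ≤ (a n : ℚ) := by exact_mod_cast ha n hn1 le_rfl
  have hWval : ∀ m, Wq n k a t m = F m + (a n : ℚ) + 1 + ((n : ℚ) - m)
      - (if m ≤ k then (t : ℚ) else 0) := fun m => rfl
  -- Step 1: reduce to the rational condition
  have step1 : (∃ α ∈ PhiC n, ip n (wC n k a t) α = 0) ↔
      (∃ p q : ℕ, 1 ≤ p ∧ p ≤ q ∧ q ≤ n ∧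
        (Wq n k a t p + Wq n k a t q = 0 ∨ (p < q ∧ Wq n k a t p = Wq n k a t q))) := by
    constructor
    · rintro ⟨α, (⟨p, q, hpq, rfl⟩ | ⟨p, q, hpq, rfl⟩), hip⟩
      · rw [ip_sum_root, wC_cast n k hn1, wC_cast n k hn1] at hip
        refine ⟨p.val + 1, q.val + 1, by omega, by omega, by omega, Or.inl ?_⟩
        exact_mod_cast hip
      · rw [ip_diff_root, wC_cast n k hn1, wC_cast n k hn1] at hip
        refine ⟨p.val + 1, q.val + 1, by omega, by omega, by omega,
          Or.inr ⟨by omega, ?_⟩⟩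
        have : ((Wq n k a t (p.val+1) : ℚ) : ℝ) = ((Wq n k a t (q.val+1) : ℚ) : ℝ) := by linarith
        exact_mod_cast this
    · rintro ⟨p, q, hp1, hpq, hqn, hcase⟩
      set P : Fin n := ⟨p - 1, by omega⟩ with hP
      set Q : Fin n := ⟨q - 1, by omega⟩ with hQ
      have hPv : P.val + 1 = p := by simp [hP]; omega
      have hQv : Q.val + 1 = q := by simp [hQ]; omega
      rcases hcase with h | ⟨hlt, h⟩
      · refine ⟨_, Or.inl ⟨P, Q, ?_, rfl⟩, ?_⟩
        · simp [hP, hQ, Fin.le_def]; omega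
        · rw [ip_sum_root, wC_cast n k hn1, wC_cast n k hn1, hPv, hQv]
          exact_mod_cast congrArg (fun x : ℚ => (x : ℝ)) h
      · refine ⟨_, Or.inr ⟨P, Q, ?_, rfl⟩, ?_⟩
        · simp [hP, hQ, Fin.lt_def]; omega
        · rw [ip_diff_root, wC_cast n k hn1, wC_cast n k hn1, hPv, hQv, h]
          ring
  rw [step1]
  -- Step 2: the rational condition iff membership in SC
  simp only [SC, Set.mem_union, Set.mem_setOf_eq]
  constructor
  · rintro ⟨p, q, hp1, hpq, hqn, hcase⟩
    rcases hcase with h | ⟨hlt, h⟩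
    · -- sum root : w_p + w_q = 0
      by_cases hqk : q ≤ k
      · -- third family, i = k+1-q, j = k+1-p
        refine Or.inr ⟨k + 1 - q, k + 1 - p, by omega, by omega, by omega, ?_⟩
        have e1 : k + 1 - (k + 1 - q) = q := by omega
        have e2 : k + 1 - (k + 1 - p) = p := by omega
        rw [e1, e2, Icc_pred n _ hn1, Icc_pred n _ hn1]
        have c1 : ((k + 1 - q : ℕ) : ℚ) = (k : ℚ) + 1 - q := by
          have : ((k + 1 - q : ℕ) : ℚ) = ((k+1 : ℕ) : ℚ) - (q:ℚ) := by
            exact_mod_cast Nat.cast_sub (by omega)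
          push_cast at this ⊢; linarith
        have c2 : ((k + 1 - p : ℕ) : ℚ) = (k : ℚ) + 1 - p := by
          have : ((k + 1 - p : ℕ) : ℚ) = ((k+1 : ℕ) : ℚ) - (p:ℚ) := by
            exact_mod_cast Nat.cast_sub (by omega)
          push_cast at this ⊢; linarith
        rw [c1, c2]
        rw [hWval p, hWval q, if_pos (by omega), if_pos hqk] at h
        simp only [hF] at h ⊢
        field_simp
        linarith
      · by_cases hpk : p ≤ k
        · -- second family, i = k+1-p, j = n+1-q
          refine Or.inl (Or.inr ⟨k + 1 - p, n + 1 - q, by omega, by omega, by omega, by omega, ?_⟩)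
          have e1 : k + 1 - (k + 1 - p) = p := by omega
          have e2 : n + 1 - (n + 1 - q) = q := by omega
          rw [e1, e2, Icc_pred n _ hn1, Icc_pred n _ hn1]
          have c1 : ((k + 1 - p : ℕ) : ℚ) = (k : ℚ) + 1 - p := by
            have : ((k + 1 - p : ℕ) : ℚ) = ((k+1 : ℕ) : ℚ) - (p:ℚ) := by
              exact_mod_cast Nat.cast_sub (by omega)
            push_cast at this ⊢; linarith
          have c2 : ((n + 1 - q : ℕ) : ℚ) = (n : ℚ) + 1 - q := by
            have : ((n + 1 - q : ℕ) : ℚ) = ((n+1 : ℕ) : ℚ) - (q:ℚ) := by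
              exact_mod_cast Nat.cast_sub (by omega)
            push_cast at this ⊢; linarith
          rw [c1, c2]
          rw [hWval p, hWval q, if_pos hpk, if_neg (by omega)] at h
          simp only [hF] at h ⊢
          linarith
        · -- both > k : impossible, coordinates positive
          exfalso
          rw [hWval p, hWval q, if_neg (by omega), if_neg (by omega)] at h
          have h1 : 0 ≤ F p := hFnonneg p (by omega)
          have h2 : 0 ≤ F q := hFnonneg q (by omega)
          have h3 : (p : ℚ) ≤ n := by exact_mod_cast le_trans hpq hqn
          have h4 : (q : ℚ) ≤ n := by exact_mod_cast hqn
          linarith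
    · -- difference root : w_p = w_q, p < q
      have hsplit := hFsplit p q (le_of_lt hlt) hqn
      have hsum : 0 ≤ ∑ u ∈ Ico p q, (a u : ℚ) := by
        refine Finset.sum_nonneg fun u hu => ?_
        rw [mem_Ico] at hu
        exact_mod_cast ha u (by omega) (by omega)
      have hpq' : (p : ℚ) < q := by exact_mod_cast hlt
      by_cases hpk : p ≤ k
      · by_cases hqk : q ≤ k
        · exfalso
          rw [hWval p, hWval q, if_pos hpk, if_pos hqk] at h
          linarith
        · -- first family, i = k+1-p, j = q-k
          refine Or.inl (Or.inl ⟨k + 1 - p, q - k, by omega, by omega, by omega, by omega, ?_⟩)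
          have e1 : k + 1 - (k + 1 - p) = p := by omega
          have e2 : k + (q - k) - 1 = q - 1 := by omega
          rw [e1, e2, Icc_pred q _ (by omega)]
          have c1 : ((k + 1 - p : ℕ) : ℚ) = (k : ℚ) + 1 - p := by
            have : ((k + 1 - p : ℕ) : ℚ) = ((k+1 : ℕ) : ℚ) - (p:ℚ) := by
              exact_mod_cast Nat.cast_sub (by omega)
            push_cast at this ⊢; linarith
          have c2 : ((q - k : ℕ) : ℚ) = (q : ℚ) - k := by
            exact_mod_cast Nat.cast_sub (by omega)
          rw [c1, c2]
          rw [hWval p, hWval q, if_pos hpk, if_neg (by omega)] at h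
          rw [hsplit] at h
          linarith
      · exfalso
        rw [hWval p, hWval q, if_neg hpk, if_neg (by omega)] at h
        rw [hsplit] at h
        linarith
  · rintro ((⟨i, j, hi1, hik, hj1, hjnk, heq⟩ | ⟨i, j, hi1, hik, hj1, hjnk, heq⟩) |
      ⟨i, j, hi1, hij, hjk, heq⟩)
    · -- first family : difference root p = k+1-i, q = k+j
      refine ⟨k + 1 - i, k + j, by omega, by omega, by omega, Or.inr ⟨by omega, ?_⟩⟩
      set p := k + 1 - i with hp
      set q := k + j with hq
      have e2 : k + j - 1 = q - 1 := by omega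
      rw [e2, Icc_pred q _ (by omega)] at heq
      have hsplit := hFsplit p q (by omega) (by omega)
      have c1 : (i : ℚ) = (k : ℚ) + 1 - p := by
        have : ((p : ℕ) : ℚ) = ((k+1 : ℕ) : ℚ) - (i:ℚ) := by
          exact_mod_cast Nat.cast_sub (by omega)
        push_cast at this ⊢; linarith
      have c2 : (j : ℚ) = (q : ℚ) - k := by
        have : ((q : ℕ) : ℚ) = (k : ℚ) + (j : ℚ) := by push_cast [hq]; ring
        linarith
      rw [c1, c2] at heq
      rw [hWval p, hWval q, if_pos (by omega), if_neg (by omega)]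
      rw [hsplit]
      linarith
    · -- second family : sum root p = k+1-i, q = n+1-j
      refine ⟨k + 1 - i, n + 1 - j, by omega, by omega, by omega, Or.inl ?_⟩
      set p := k + 1 - i with hp
      set q := n + 1 - j with hq
      have e1 : (k + 1 - i : ℕ) = p := rfl
      have e2 : (n + 1 - j : ℕ) = q := rfl
      rw [Icc_pred n _ hn1, Icc_pred n _ hn1] at heq
      have c1 : (i : ℚ) = (k : ℚ) + 1 - p := by
        have : ((p : ℕ) : ℚ) = ((k+1 : ℕ) : ℚ) - (i:ℚ) := by
          exact_mod_cast Nat.cast_sub (by omega)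
        push_cast at this ⊢; linarith
      have c2 : (j : ℚ) = (n : ℚ) + 1 - q := by
        have : ((q : ℕ) : ℚ) = ((n+1 : ℕ) : ℚ) - (j:ℚ) := by
          exact_mod_cast Nat.cast_sub (by omega)
        push_cast at this ⊢; linarith
      rw [c1, c2] at heq
      rw [hWval p, hWval q, if_pos (by omega), if_neg (by omega)]
      simp only [hF] at heq ⊢
      linarith
    · -- third family : sum root p = k+1-j, q = k+1-i
      refine ⟨k + 1 - j, k + 1 - i, by omega, by omega, by omega, Or.inl ?_⟩
      set p := k + 1 - j with hp
      set q := k + 1 - i with hq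
      rw [Icc_pred n _ hn1, Icc_pred n _ hn1] at heq
      have c1 : (j : ℚ) = (k : ℚ) + 1 - p := by
        have : ((p : ℕ) : ℚ) = ((k+1 : ℕ) : ℚ) - (j:ℚ) := by
          exact_mod_cast Nat.cast_sub (by omega)
        push_cast at this ⊢; linarith
      have c2 : (i : ℚ) = (k : ℚ) + 1 - q := by
        have : ((q : ℕ) : ℚ) = ((k+1 : ℕ) : ℚ) - (i:ℚ) := by
          exact_mod_cast Nat.cast_sub (by omega)
        push_cast at this ⊢; linarith
      rw [c1, c2] at heq
      rw [hWval p, hWval q, if_pos (by omega), if_pos (by omega)]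
      simp only [hF] at heq ⊢
      field_simp at heq
      linarith
end

section
/- (Top-index criterion of type C, k < n.) Let n ≥ 2 and 1 ≤ k ≤ n−1, and let a_1,…,a_n be nonnegative integers. Then for every integer t, the number of positive roots α ∈ Φ⁺_C with ⟨w(t), α⟩ < 0 equals k(4n+1−3k)/2 (the dimension of the isotropic Grassmannian C_n/P(α_k)) if and only if t > M^C_{k,a}. -/
open Finset

/-- `M^C_{k,a}`, the largest entry of the step matrix. -/
def MC (n k : ℕ) (a : ℕ → ℤ) : ℤ :=
  (∑ u ∈ Icc 1 (n - 1), a u) + (∑ u ∈ Icc (k + 1) (n - 1), a u) + 2 * a n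
    + 2 * (n : ℤ) - (k : ℤ)

/-! ### Auxiliary definitions and lemmas -/

/-- The "sum" root `eₚ+e_q`. -/
def sr (n : ℕ) (p q : Fin n) : Fin n → ℝ :=
  fun i => (if i = p then (1:ℝ) else 0) + (if i = q then 1 else 0)

/-- The "difference" root `eₚ-e_q`. -/
def dr (n : ℕ) (p q : Fin n) : Fin n → ℝ :=
  fun i => (if i = p then (1:ℝ) else 0) - (if i = q then 1 else 0)

theorem ip_sr (n : ℕ) (w : Fin n → ℝ) (p q : Fin n) : ip n w (sr n p q) = w p + w q := by
  simp [ip, sr, mul_add, Finset.sum_add_distrib, mul_ite]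

theorem ip_dr (n : ℕ) (w : Fin n → ℝ) (p q : Fin n) : ip n w (dr n p q) = w p - w q := by
  simp [ip, dr, mul_sub, Finset.sum_sub_distrib, mul_ite]

theorem sr_inj (n : ℕ) (p q p' q' : Fin n) (hpq : p ≤ q) (hpq' : p' ≤ q')
    (h : sr n p q = sr n p' q') : p = p' ∧ q = q' := by
  have h1 := congrFun h p
  have h2 := congrFun h q
  have h3 := congrFun h p'
  have h4 := congrFun h q'
  simp only [sr] at h1 h2 h3 h4
  rw [Fin.le_def] at hpq hpq'
  have e1 : p = p' ∨ p = q' := by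
    by_contra hc
    push_neg at hc
    simp [hc.1, hc.2] at h1
    split_ifs at h1 <;> norm_num at h1
  have e2 : q = p' ∨ q = q' := by
    by_contra hc
    push_neg at hc
    simp [hc.1, hc.2] at h2
    split_ifs at h2 <;> norm_num at h2
  have e3 : p' = p ∨ p' = q := by
    by_contra hc
    push_neg at hc
    simp [hc.1, hc.2] at h3
    split_ifs at h3 <;> norm_num at h3
  have e4 : q' = p ∨ q' = q := by
    by_contra hc
    push_neg at hc
    simp [hc.1, hc.2] at h4
    split_ifs at h4 <;> norm_num at h4
  simp only [Fin.ext_iff] at e1 e2 e3 e4 ⊢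
  omega

theorem dr_inj (n : ℕ) (p q p' q' : Fin n) (hpq : p < q) (hpq' : p' < q')
    (h : dr n p q = dr n p' q') : p = p' ∧ q = q' := by
  have h3 := congrFun h p'
  have h4 := congrFun h q'
  have hne' : p' ≠ q' := Fin.ne_of_lt hpq'
  simp only [dr, if_pos rfl, if_neg hne', if_neg (Ne.symm hne')] at h3 h4
  constructor
  · split_ifs at h3 <;> simp_all <;> norm_num at h3
  · split_ifs at h4 <;> simp_all <;> norm_num at h4

theorem sr_ne_dr (n : ℕ) (p q p' q' : Fin n) (hpq' : p' < q') : sr n p q ≠ dr n p' q' := by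
  intro h
  have h4 := congrFun h q'
  have hne' : p' ≠ q' := Fin.ne_of_lt hpq'
  simp only [sr, dr, if_neg (Ne.symm hne'), if_pos rfl] at h4
  split_ifs at h4 <;> norm_num at h4

theorem cardlt (n m : ℕ) (h : m ≤ n) :
    ((univ : Finset (Fin n)).filter fun q => q.val < m).card = m := by
  rw [Finset.card_filter, Fin.sum_univ_eq_sum_range (fun j => if j < m then (1:ℕ) else 0),
    ← Finset.card_filter]
  have : (range n).filter (· < m) = range m := by ext j; simp [Finset.mem_range]; omega
  rw [this, Finset.card_range]

theorem cardge (n m : ℕ) (h : m ≤ n) :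
    ((univ : Finset (Fin n)).filter fun q => m ≤ q.val).card = n - m := by
  have h2 := Finset.card_filter_add_card_filter_not
    (s := (univ : Finset (Fin n))) (p := fun q => q.val < m)
  rw [cardlt n m h] at h2
  have h3 : ((univ : Finset (Fin n)).filter fun q => ¬ q.val < m)
      = (univ.filter fun q => m ≤ q.val) := by
    ext j; simp [not_lt]
  rw [h3] at h2
  simp only [Finset.card_univ, Fintype.card_fin] at h2
  omega

theorem cardA (n k : ℕ) (hk : k ≤ n) :
    ((univ : Finset (Fin n × Fin n)).filter fun pq => pq.1 ≤ pq.2 ∧ pq.1.val < k).card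
      = ∑ j ∈ range k, (n - j) := by
  rw [Finset.card_filter, Fintype.sum_prod_type]
  have hinner : ∀ p : Fin n, (∑ q : Fin n, if (p ≤ q ∧ p.val < k) then (1:ℕ) else 0)
      = if p.val < k then n - p.val else 0 := by
    intro p
    by_cases hp : p.val < k
    · rw [if_pos hp]
      simp only [hp, and_true]
      rw [← Finset.card_filter]
      have he : ((univ : Finset (Fin n)).filter fun q => p ≤ q)
          = (univ.filter fun q => p.val ≤ q.val) := by
        apply Finset.filter_congr; intro q _; rw [Fin.le_def]
      rw [he, cardge n p.val p.isLt.le]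
    · simp [hp]
  rw [Finset.sum_congr rfl (fun p _ => hinner p)]
  rw [Fin.sum_univ_eq_sum_range (fun j => if j < k then n - j else 0)]
  rw [← Finset.sum_filter]
  congr 1
  ext j; simp [Finset.mem_range]; omega

theorem cardB (n k : ℕ) (hk : k ≤ n) :
    ((univ : Finset (Fin n × Fin n)).filter fun pq => pq.1.val < k ∧ k ≤ pq.2.val).card
      = k * (n - k) := by
  have h : ((univ : Finset (Fin n × Fin n)).filter fun pq => pq.1.val < k ∧ k ≤ pq.2.val)
      = (univ.filter fun p : Fin n => p.val < k) ×ˢ (univ.filter fun q : Fin n => k ≤ q.val) := by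
    ext pq; simp [Finset.mem_product, and_assoc]
  rw [h, Finset.card_product, cardlt n k hk, cardge n k hk]

theorem gauss (n : ℕ) : ∀ k, k ≤ n → 2 * ∑ j ∈ range k, (n - j) = k * (2*n - k + 1) := by
  intro k
  induction k with
  | zero => simp
  | succ k ih =>
    intro hk
    rw [Finset.sum_range_succ, Nat.mul_add, ih (by omega)]
    have h1 : k < n := by omega
    zify [h1.le, (by omega : k ≤ 2*n), (by omega : k+1 ≤ 2*n)]
    ring

/-- `c j`, the one-based coordinates of `λ+ρ`. -/
def cc (n : ℕ) (a : ℕ → ℤ) (j : ℕ) : ℤ := (∑ u ∈ Icc j (n-1), a u) + a n + 1 + ((n:ℤ) - j)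

theorem cc_mono (n : ℕ) (a : ℕ → ℤ) (ha : ∀ u, 1 ≤ u → u ≤ n → 0 ≤ a u)
    (j j' : ℕ) (hj1 : 1 ≤ j) (hjj' : j ≤ j') : cc n a j' ≤ cc n a j := by
  unfold cc
  have hsub : Icc j' (n-1) ⊆ Icc j (n-1) := Finset.Icc_subset_Icc hjj' le_rfl
  have hsum : ∑ u ∈ Icc j' (n-1), a u ≤ ∑ u ∈ Icc j (n-1), a u := by
    apply Finset.sum_le_sum_of_subset_of_nonneg hsub
    intro u hu _
    rw [Finset.mem_Icc] at hu
    exact ha u (le_trans hj1 hu.1) (le_trans hu.2 (Nat.sub_le n 1))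
  have : (j:ℤ) ≤ (j':ℤ) := by exact_mod_cast hjj'
  linarith

theorem cc_pos (n : ℕ) (a : ℕ → ℤ) (ha : ∀ u, 1 ≤ u → u ≤ n → 0 ≤ a u)
    (j : ℕ) (hn : 1 ≤ n) (hj1 : 1 ≤ j) (hjn : j ≤ n) : 1 ≤ cc n a j := by
  unfold cc
  have hsum : 0 ≤ ∑ u ∈ Icc j (n-1), a u := by
    apply Finset.sum_nonneg
    intro u hu
    rw [Finset.mem_Icc] at hu
    exact ha u (le_trans hj1 hu.1) (le_trans hu.2 (Nat.sub_le n 1))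
  have han : 0 ≤ a n := ha n hn le_rfl
  have : (j:ℤ) ≤ (n:ℤ) := by exact_mod_cast hjn
  linarith

/-- Top-index criterion of type `C`, `k < n`: `λ+ρ-tλ_k` is regular of index
`dim Cₙ/P(α_k) = k(4n+1-3k)/2` iff `t > M^C_{k,a}`. -/
theorem top_index_criterion_C_lt (n k : ℕ) (hn : 2 ≤ n) (hk1 : 1 ≤ k) (hkn : k ≤ n - 1)
    (a : ℕ → ℤ) (ha : ∀ u, 1 ≤ u → u ≤ n → 0 ≤ a u) (t : ℤ) :
    {α ∈ PhiC n | ip n (wC n k a t) α < 0}.ncard = k * (4 * n + 1 - 3 * k) / 2 ↔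
      MC n k a < t := by
  classical
  have hkn2 : k < n := by omega
  set c : ℕ → ℤ := cc n a with hc
  set w : Fin n → ℝ := wC n k a t with hwdef
  -- MC in terms of c
  have hMeq : MC n k a = c 1 + c (k+1) := by
    simp only [hc, MC, cc]
    push_cast
    ring
  -- coordinates of w
  have hw : ∀ i : Fin n, w i = ((c (i.val+1) : ℤ) : ℝ)
      - (if i.val + 1 ≤ k then (t:ℝ) else 0) := by
    intro i
    simp only [hwdef, hc, wC, cc]
    push_cast
    ring
  have hmono : ∀ j j', 1 ≤ j → j ≤ j' → c j' ≤ c j := fun j j' h1 h2 => cc_mono n a ha j j' h1 h2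
  have hpos : ∀ j, 1 ≤ j → j ≤ n → 1 ≤ c j := fun j h1 h2 => cc_pos n a ha j (by omega) h1 h2
  -- the target finsets
  set TA := (univ : Finset (Fin n × Fin n)).filter fun pq => pq.1 ≤ pq.2 ∧ pq.1.val < k with hTA
  set TB := (univ : Finset (Fin n × Fin n)).filter fun pq => pq.1.val < k ∧ k ≤ pq.2.val with hTB
  set Tgt : Finset (Fin n → ℝ) :=
    TA.image (fun pq => sr n pq.1 pq.2) ∪ TB.image (fun pq => dr n pq.1 pq.2) with hTgt
  set S : Set (Fin n → ℝ) := {α ∈ PhiC n | ip n w α < 0} with hS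
  -- every pair in TB satisfies p < q
  have hTBlt : ∀ pq : Fin n × Fin n, pq ∈ TB → pq.1 < pq.2 := by
    intro pq hpq
    rw [hTB, Finset.mem_filter] at hpq
    exact Fin.lt_def.mpr (by omega)
  -- cardinality of the target
  have hcard : Tgt.card = k * (4 * n + 1 - 3 * k) / 2 := by
    have hdisj : Disjoint (TA.image (fun pq => sr n pq.1 pq.2))
        (TB.image (fun pq => dr n pq.1 pq.2)) := by
      rw [Finset.disjoint_left]
      intro x hxA hxB
      rw [Finset.mem_image] at hxA hxB
      obtain ⟨pq, hpq, hx⟩ := hxA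
      obtain ⟨pq', hpq', hx'⟩ := hxB
      exact sr_ne_dr n pq.1 pq.2 pq'.1 pq'.2 (hTBlt pq' hpq') (hx.trans hx'.symm)
    have hA : (TA.image (fun pq => sr n pq.1 pq.2)).card = TA.card := by
      apply Finset.card_image_of_injOn
      intro pq hpq pq' hpq' hx
      simp only [hTA, Finset.mem_coe, Finset.mem_filter] at hpq hpq'
      obtain ⟨h1, h2⟩ := sr_inj n pq.1 pq.2 pq'.1 pq'.2 hpq.2.1 hpq'.2.1 hx
      exact Prod.ext h1 h2
    have hB : (TB.image (fun pq => dr n pq.1 pq.2)).card = TB.card := by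
      apply Finset.card_image_of_injOn
      intro pq hpq pq' hpq' hx
      obtain ⟨h1, h2⟩ := dr_inj n pq.1 pq.2 pq'.1 pq'.2 (hTBlt pq (Finset.mem_coe.mp hpq))
        (hTBlt pq' (Finset.mem_coe.mp hpq')) hx
      exact Prod.ext h1 h2
    rw [hTgt, Finset.card_union_of_disjoint hdisj, hA, hB, hTA, hTB,
      cardA n k hkn2.le, cardB n k hkn2.le]
    have h2c : 2 * ((∑ j ∈ range k, (n - j)) + k * (n - k)) = k * (4 * n + 1 - 3 * k) := by
      rw [Nat.mul_add, gauss n k hkn2.le]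
      zify [(by omega : k ≤ 2*n), (by omega : k ≤ n), (by omega : 3*k ≤ 4*n+1)]
      ring
    omega
  -- S is always contained in the target
  have hsub : S ⊆ ↑Tgt := by
    intro α hα
    obtain ⟨hroot, hneg⟩ := hα
    rcases hroot with ⟨p, q, hpq, rfl⟩ | ⟨p, q, hpq, rfl⟩
    · -- sum root
      have hneg0 : ip n w (sr n p q) < 0 := hneg
      have hneg' : w p + w q < 0 := by rwa [ip_sr n w p q] at hneg0
      have hp : p.val < k := by
        by_contra hp
        push_neg at hp
        rw [hw p, hw q, if_neg (by omega), if_neg (by omega : ¬ q.val + 1 ≤ k)] at hneg'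
        · have c1 : (1:ℤ) ≤ c (p.val+1) := hpos _ (by omega) (by omega)
          have c2 : (1:ℤ) ≤ c (q.val+1) := hpos _ (by omega) (by omega)
          have c1' : (1:ℝ) ≤ ((c (p.val+1) : ℤ):ℝ) := by exact_mod_cast c1
          have c2' : (1:ℝ) ≤ ((c (q.val+1) : ℤ):ℝ) := by exact_mod_cast c2
          linarith
      · rw [Finset.coe_union]
        left
        rw [Finset.coe_image]
        exact ⟨(p, q), by rw [hTA]; simp [hpq, hp], rfl⟩
    · -- difference root
      have hneg0 : ip n w (dr n p q) < 0 := hneg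
      have hneg' : w p - w q < 0 := by rwa [ip_dr n w p q] at hneg0
      have hplt : p.val < q.val := Fin.lt_def.mp hpq
      have hcond : p.val < k ∧ k ≤ q.val := by
        by_contra hcd
        have hge : c (q.val+1) ≤ c (p.val+1) := hmono _ _ (by omega) (by omega)
        have hge' : ((c (q.val+1) : ℤ):ℝ) ≤ ((c (p.val+1) : ℤ):ℝ) := by exact_mod_cast hge
        rcases not_and_or.mp hcd with hcd | hcd
        · push_neg at hcd
          rw [hw p, hw q, if_neg (by omega), if_neg (by omega)] at hneg'
          linarith
        · push_neg at hcd
          have hpk : p.val < k := by omega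
          rw [hw p, hw q, if_pos (by omega), if_pos (by omega)] at hneg'
          linarith
      rw [Finset.coe_union]
      right
      rw [Finset.coe_image]
      exact ⟨(p, q), by rw [hTB]; simp [hcond.1, hcond.2], rfl⟩
  constructor
  · -- count = max ⟹ t > M
    intro hcardS
    by_contra hMt
    push_neg at hMt
    rw [hMeq] at hMt
    have h01 : ((⟨0, by omega⟩ : Fin n) : ℕ) = 0 := rfl
    have hk1' : ((⟨k, hkn2⟩ : Fin n) : ℕ) = k := rfl
    have hmem : sr n ⟨0, by omega⟩ ⟨k, hkn2⟩ ∈ Tgt := by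
      rw [hTgt, Finset.mem_union]
      left
      rw [Finset.mem_image]
      refine ⟨(⟨0, by omega⟩, ⟨k, hkn2⟩), ?_, rfl⟩
      rw [hTA, Finset.mem_filter]
      exact ⟨Finset.mem_univ _, Fin.mk_le_mk.mpr (Nat.zero_le k), hk1⟩
    have hnotS : sr n ⟨0, by omega⟩ ⟨k, hkn2⟩ ∉ S := by
      intro hmemS
      have hneg : ip n w (sr n ⟨0, by omega⟩ ⟨k, hkn2⟩) < 0 := hmemS.2
      rw [ip_sr n w _ _, hw _, hw _, h01, hk1'] at hneg
      rw [if_pos (by omega : 0 + 1 ≤ k), if_neg (by omega : ¬ (k + 1 ≤ k))] at hneg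
      have hge : (0:ℤ) ≤ c 1 + c (k+1) - t := by omega
      have hger : (0:ℝ) ≤ ((c 1 + c (k+1) - t : ℤ):ℝ) := by exact_mod_cast hge
      push_cast at hger
      norm_num at hneg
      linarith
    have hss : S ⊂ ↑Tgt := ⟨hsub, fun habs => hnotS (habs hmem)⟩
    have hlt := Set.ncard_lt_ncard hss Tgt.finite_toSet
    rw [Set.ncard_coe_finset, hcard] at hlt
    omega
  · -- t > M ⟹ count = max
    intro hMt
    rw [hMeq] at hMt
    have hSeq : S = ↑Tgt := by
      apply Set.Subset.antisymm hsub
      intro α hα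
      rw [hTgt, Finset.coe_union, Finset.coe_image, Finset.coe_image] at hα
      have hc1 : (1:ℤ) ≤ c (k+1) := hpos _ (by omega) (by omega)
      rcases hα with ⟨pq, hpq, rfl⟩ | ⟨pq, hpq, rfl⟩
      · rw [hTA] at hpq
        simp only [Finset.mem_coe, Finset.mem_filter] at hpq
        obtain ⟨_, hle, hplt⟩ := hpq
        refine ⟨Or.inl ⟨pq.1, pq.2, hle, rfl⟩, ?_⟩
        rw [ip_sr n w pq.1 pq.2, hw pq.1, hw pq.2, if_pos (by omega)]
        have hq1 : c (pq.2.val+1) ≤ c 1 := hmono _ _ le_rfl (by omega)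
        have hp1 : c (pq.1.val+1) ≤ c 1 := hmono _ _ le_rfl (by omega)
        by_cases hq : pq.2.val + 1 ≤ k
        · rw [if_pos hq]
          have key : c (pq.1.val+1) + c (pq.2.val+1) - 2*t < 0 := by omega
          have key' : ((c (pq.1.val+1) + c (pq.2.val+1) - 2*t : ℤ):ℝ) < 0 := by exact_mod_cast key
          push_cast at key'
          linarith
        · rw [if_neg hq]
          have hq2 : c (pq.2.val+1) ≤ c (k+1) := hmono _ _ (by omega) (by omega)
          have key : c (pq.1.val+1) + c (pq.2.val+1) - t < 0 := by omega
          have key' : ((c (pq.1.val+1) + c (pq.2.val+1) - t : ℤ):ℝ) < 0 := by exact_mod_cast key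
          push_cast at key'
          linarith
      · rw [hTB] at hpq
        simp only [Finset.mem_coe, Finset.mem_filter] at hpq
        obtain ⟨_, hplt, hqge⟩ := hpq
        have hlt : pq.1 < pq.2 := Fin.lt_def.mpr (by omega)
        refine ⟨Or.inr ⟨pq.1, pq.2, hlt, rfl⟩, ?_⟩
        rw [ip_dr n w pq.1 pq.2, hw pq.1, hw pq.2, if_pos (by omega), if_neg (by omega)]
        have hp1 : c (pq.1.val+1) ≤ c 1 := hmono _ _ le_rfl (by omega)
        have hq1 : (1:ℤ) ≤ c (pq.2.val+1) := hpos _ (by omega) (by omega)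
        have key : c (pq.1.val+1) - t - c (pq.2.val+1) < 0 := by omega
        have key' : ((c (pq.1.val+1) - t - c (pq.2.val+1) : ℤ):ℝ) < 0 := by exact_mod_cast key
        push_cast at key'
        linarith
    rw [hSeq, Set.ncard_coe_finset, hcard]
end

section
/- (Index-zero criterion of type B, k < n.) Let n ≥ 2 and 1 ≤ k ≤ n−1, and let a_1,…,a_n be nonnegative integers. Then for every integer t, one has ⟨w(t), α⟩ > 0 for every positive root α ∈ Φ⁺_B if and only if t ≤ a_k. In particular if a_k = 0 this holds if and only if t < 1. -/
open Finset

/-- Integer part of the coordinates of `wB` (everything except `(aₙ+1)/2`). -/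
def gB (n k : ℕ) (a : ℕ → ℤ) (t : ℤ) (v : ℕ) : ℤ :=
  (∑ u ∈ Icc (v + 1) (n - 1), a u) + ((n : ℤ) - (v + 1)) - (if v + 1 ≤ k then t else 0)

lemma wB_eq_gB (n k : ℕ) (a : ℕ → ℤ) (t : ℤ) (i : Fin n) :
    wB n k a t i = (gB n k a t i.val : ℝ) + ((a n : ℝ) + 1) / 2 := by
  unfold wB gB
  split_ifs <;> push_cast <;> ring

lemma gB_step (n k : ℕ) (a : ℕ → ℤ) (t : ℤ) (v : ℕ) (hv : v + 1 ≤ n - 1) :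
    gB n k a t v = gB n k a t (v + 1) + a (v + 1) + 1 - (if v + 1 = k then t else 0) := by
  unfold gB
  rw [show Icc (v + 1) (n - 1) = insert (v + 1) (Icc (v + 2) (n - 1)) from by
        ext x; simp [Finset.mem_Icc, Finset.mem_insert]; omega,
      Finset.sum_insert (by simp)]
  rcases Nat.lt_trichotomy (v + 1) k with h | h | h
  · rw [if_pos h.le, if_pos (by omega : v + 1 + 1 ≤ k), if_neg (by omega)]; push_cast; ring
  · rw [if_pos h.le, if_neg (by omega), if_pos h]; push_cast; ring
  · rw [if_neg (by omega), if_neg (by omega), if_neg (by omega)]; push_cast; ring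

lemma gB_last (n k : ℕ) (a : ℕ → ℤ) (t : ℤ) (hn : 1 ≤ n) (hkn : k ≤ n - 1) :
    gB n k a t (n - 1) = 0 := by
  unfold gB
  rw [Finset.Icc_eq_empty (by omega), if_neg (by omega), Finset.sum_empty]
  omega

lemma gB_ge (n k : ℕ) (hk1 : 1 ≤ k) (hkn : k ≤ n - 1) (a : ℕ → ℤ)
    (ha : ∀ u, 1 ≤ u → u ≤ n → 0 ≤ a u) (t : ℤ) (ht : t ≤ a k) :
    ∀ d v, v + d ≤ n - 1 → gB n k a t (v + d) + d ≤ gB n k a t v := by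
  intro d
  induction d with
  | zero => simp
  | succ d ih =>
    intro v hv
    have h1 := gB_step n k a t v (by omega)
    have h2 := ih (v + 1) (by omega)
    rw [show v + 1 + d = v + (d + 1) from by omega] at h2
    have h3 : 0 ≤ a (v + 1) := ha (v + 1) (by omega) (by omega)
    have h4 : (if v + 1 = k then t else 0) ≤ a (v + 1) := by
      split_ifs with h
      · rw [h]; exact ht
      · exact h3
    push_cast at h2 ⊢
    linarith

/-- Index-zero criterion of type `B`, `k < n`: `λ+ρ-tλ_k` is regular of index `0`
iff `t ≤ a_k`; in particular, if `a_k = 0` this happens iff `t < 1`. -/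
theorem index_zero_criterion_B_lt (n k : ℕ) (hn : 2 ≤ n) (hk1 : 1 ≤ k) (hkn : k ≤ n - 1)
    (a : ℕ → ℤ) (ha : ∀ u, 1 ≤ u → u ≤ n → 0 ≤ a u) (t : ℤ) :
    ((∀ α ∈ PhiB n, 0 < ip n (wB n k a t) α) ↔ t ≤ a k) ∧
      (a k = 0 → ((∀ α ∈ PhiB n, 0 < ip n (wB n k a t) α) ↔ t < 1)) := by
  have hkn' : k < n := by omega
  have ip_single : ∀ (v : Fin n → ℝ) (p : Fin n),
      ip n v (fun i => if i = p then (1:ℝ) else 0) = v p := by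
    intro v p
    simp [ip, mul_ite, mul_one, mul_zero]
  have ip_add : ∀ (v : Fin n → ℝ) (p q : Fin n), p ≠ q →
      ip n v (fun i => (if i = p then (1:ℝ) else 0) + (if i = q then 1 else 0)) = v p + v q := by
    intro v p q hpq
    simp [ip, mul_add, mul_ite, mul_one, mul_zero, Finset.sum_add_distrib]
  have ip_sub : ∀ (v : Fin n → ℝ) (p q : Fin n), p ≠ q →
      ip n v (fun i => (if i = p then (1:ℝ) else 0) - (if i = q then 1 else 0)) = v p - v q := by
    intro v p q hpq
    simp [ip, mul_sub, mul_ite, mul_one, mul_zero, Finset.sum_sub_distrib]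
  have main : (∀ α ∈ PhiB n, 0 < ip n (wB n k a t) α) ↔ t ≤ a k := by
    constructor
    · intro h
      set p : Fin n := ⟨k - 1, by omega⟩
      set q : Fin n := ⟨k, hkn'⟩
      have hpq : p < q := by
        simp only [Fin.lt_def, p, q]
        omega
      have hmem : (fun i => (if i = p then (1:ℝ) else 0) - (if i = q then 1 else 0)) ∈ PhiB n :=
        Or.inl (Or.inr ⟨p, q, hpq, rfl⟩)
      have h2 := h _ hmem
      rw [ip_sub _ _ _ hpq.ne, wB_eq_gB, wB_eq_gB] at h2
      have hstep := gB_step n k a t (k - 1) (by omega)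
      rw [show k - 1 + 1 = k from by omega, if_pos rfl] at hstep
      have hval : p.val = k - 1 := rfl
      have hqval : q.val = k := rfl
      rw [hval, hqval, hstep] at h2
      have : (0:ℝ) < ((a k + 1 - t : ℤ) : ℝ) := by push_cast; push_cast at h2; linarith
      have := by exact_mod_cast this
      omega
    · intro ht α hα
      have hpos : ∀ i : Fin n, 0 < wB n k a t i := by
        intro i
        rw [wB_eq_gB]
        have h1 : (0:ℤ) ≤ gB n k a t i.val := by
          have := gB_ge n k hk1 hkn a ha t ht (n - 1 - i.val) i.val (by omega)
          rw [show i.val + (n - 1 - i.val) = n - 1 from by omega,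
            gB_last n k a t (by omega) hkn] at this
          have : (0:ℤ) ≤ (n - 1 - i.val : ℕ) := Int.natCast_nonneg _
          omega
        have h2 : (0:ℤ) ≤ a n := ha n (by omega) le_rfl
        have h1' : (0:ℝ) ≤ (gB n k a t i.val : ℤ) := by exact_mod_cast h1
        have h2' : (0:ℝ) ≤ (a n : ℤ) := by exact_mod_cast h2
        linarith
      have hmono : ∀ p q : Fin n, p < q → wB n k a t q < wB n k a t p := by
        intro p q hpq
        rw [wB_eq_gB, wB_eq_gB]
        have h1 := gB_ge n k hk1 hkn a ha t ht (q.val - p.val) p.val (by omega)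
        rw [show p.val + (q.val - p.val) = q.val from by omega] at h1
        have h2 : (1:ℤ) ≤ (q.val - p.val : ℕ) := by
          have : (1:ℕ) ≤ q.val - p.val := by omega
          exact_mod_cast this
        have h3 : gB n k a t q.val < gB n k a t p.val := by omega
        have h3' : (gB n k a t q.val : ℝ) < (gB n k a t p.val : ℝ) := by exact_mod_cast h3
        linarith
      rcases hα with (⟨p, q, hpq, rfl⟩ | ⟨p, q, hpq, rfl⟩) | ⟨p, rfl⟩
      · rw [ip_add _ _ _ hpq.ne]
        have := hpos p; have := hpos q; linarith
      · rw [ip_sub _ _ _ hpq.ne]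
        have := hmono p q hpq; linarith
      · rw [ip_single]
        exact hpos p
  exact ⟨main, fun hak => main.trans (by omega)⟩
end

section
/- (Combinatorial content of Corollary 3.14(1), type B, highest weight supported below k.) Let n ≥ 3 and 2 ≤ k ≤ n−1, and let a_1,…,a_n be integers with a_u = 0 for all k ≤ u ≤ n and 0 ≤ a_u ≤ 2n−2k for all 1 ≤ u ≤ k−1. Then every integer l with 1 ≤ l ≤ M^B_{k,a} belongs to the step-matrix entry set S^B_{k,a}. -/
open Finset

/-- `M^B_{k,a}`, the largest entry of the step matrix. -/
def MB (n k : ℕ) (a : ℕ → ℤ) : ℤ :=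
  (∑ u ∈ Icc 1 (n - 1), a u) + (∑ u ∈ Icc (k + 1) (n - 1), a u) + a n
    + 2 * (n : ℤ) - (k : ℤ) - 1

/-- Corollary 3.14(1) for `Bₙ/P(α_k)`: if the highest weight is supported below `k`
with coefficients at most `2n-2k`, then every integer in `[1, M^B_{k,a}]` is an entry
of the step matrix. -/
theorem cor_B_lt_support_below (n k : ℕ) (hn : 3 ≤ n) (hk1 : 2 ≤ k) (hkn : k ≤ n - 1)
    (a : ℕ → ℤ) (h0 : ∀ u, k ≤ u → u ≤ n → a u = 0)
    (hb : ∀ u, 1 ≤ u → u ≤ k - 1 → 0 ≤ a u ∧ a u ≤ 2 * (n : ℤ) - 2 * (k : ℤ)) :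
    ∀ l : ℤ, 1 ≤ l → l ≤ MB n k a → (l : ℚ) ∈ SB n k a := by
  intro l hl1 hl2
  have hkln : k < n := by omega
  set A : ℕ → ℤ := fun i => ∑ u ∈ Icc (k + 1 - i) (k - 1), a u with hA
  -- extending the upper limit beyond k-1 does not change the sum
  have hsum : ∀ i m : ℕ, 1 ≤ i → i ≤ k → k - 1 ≤ m → m ≤ n →
      ∑ u ∈ Icc (k + 1 - i) m, a u = A i := by
    intro i m hi1 hik hm1 hm2
    have hsplit : Icc (k + 1 - i) m = Icc (k + 1 - i) (k - 1) ∪ Icc k m := by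
      ext u; simp only [mem_Icc, mem_union]; omega
    rw [hsplit, Finset.sum_union (by simp only [Finset.disjoint_left, mem_Icc]; omega)]
    have hz : ∑ u ∈ Icc k m, a u = 0 :=
      Finset.sum_eq_zero fun u hu => by
        rw [mem_Icc] at hu; exact h0 u hu.1 (le_trans hu.2 hm2)
    simp [hA, hz]
  have hA1 : A 1 = 0 := by
    have he : Icc (k + 1 - 1) (k - 1) = (∅ : Finset ℕ) := Finset.Icc_eq_empty (by omega)
    simp only [hA]
    rw [he, Finset.sum_empty]
  have hstep : ∀ i, 1 ≤ i → i < k → A (i + 1) = a (k - i) + A i := by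
    intro i h1 h2
    have h3 : Icc (k + 1 - (i + 1)) (k - 1) = insert (k - i) (Icc (k + 1 - i) (k - 1)) := by
      ext u; simp only [mem_Icc, mem_insert]; omega
    simp only [hA]
    rw [h3, Finset.sum_insert (by simp only [mem_Icc]; omega)]
  have han : a n = 0 := h0 n (by omega) le_rfl
  have hMB : MB n k a = A k + 2 * (n : ℤ) - (k : ℤ) - 1 := by
    have h1 : ∑ u ∈ Icc 1 (n - 1), a u = A k := by
      have hh := hsum k (n - 1) (by omega) le_rfl (by omega) (by omega)
      have hkk : k + 1 - k = 1 := by omega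
      rwa [hkk] at hh
    have h2 : ∑ u ∈ Icc (k + 1) (n - 1), a u = 0 :=
      Finset.sum_eq_zero fun u hu => by
        rw [mem_Icc] at hu; exact h0 u (by omega) (by omega)
    rw [MB, h1, h2, han]; ring
  set N : ℕ := n - k with hNdef
  have hN1 : 1 ≤ N := by omega
  have hNc : (N : ℤ) = (n : ℤ) - (k : ℤ) := by omega
  -- pick the largest i with A i + i ≤ l
  set i0 := Nat.findGreatest (fun i => A i + i ≤ l) k with hi0def
  have hP1 : A 1 + ((1 : ℕ) : ℤ) ≤ l := by rw [hA1]; push_cast; omega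
  have hi0k : i0 ≤ k := Nat.findGreatest_le k
  have hi01 : 1 ≤ i0 := Nat.le_findGreatest (by omega) hP1
  have hPi0 : A i0 + (i0 : ℤ) ≤ l := by
    exact Nat.findGreatest_spec (P := fun i => A i + (i : ℤ) ≤ l) (n := k) (m := 1) (by omega) hP1
  have hmax : ∀ m : ℕ, i0 < m → m ≤ k → ¬(A m + (m : ℤ) ≤ l) := fun m h1 h2 =>
    Nat.findGreatest_is_greatest h1 h2
  -- helper to rewrite rational sums
  have hcast : ∀ (s : Finset ℕ), (∑ u ∈ s, (a u : ℚ)) = ((∑ u ∈ s, a u : ℤ) : ℚ) := by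
    intro s; push_cast; ring
  simp only [SB, Set.mem_union, Set.mem_setOf_eq]
  by_cases hc1 : l ≤ A i0 + (i0 : ℤ) + (N : ℤ) - 1
  · -- family 1
    left; left
    set j : ℕ := (l - A i0 - (i0 : ℤ) + 1).toNat with hjdef
    have hjval : (j : ℤ) = l - A i0 - (i0 : ℤ) + 1 := Int.toNat_of_nonneg (by omega)
    refine ⟨i0, j, hi01, hi0k, by omega, by omega, ?_⟩
    have hs := hsum i0 (k + j - 1) hi01 hi0k (by omega) (by omega)
    rw [hcast, hs]
    have hval : l = A i0 + (i0 : ℤ) + (j : ℤ) - 1 := by omega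
    have hvalQ : (l : ℚ) = (A i0 : ℚ) + (i0 : ℚ) + (j : ℚ) - 1 := by exact_mod_cast hval
    linarith [hvalQ]
  · by_cases hc2 : l ≤ A i0 + (i0 : ℤ) + 2 * (N : ℤ) - 1
    · -- family 2
      left; right
      set j : ℕ := (l - A i0 - (i0 : ℤ) - (N : ℤ) + 1).toNat with hjdef
      have hjval : (j : ℤ) = l - A i0 - (i0 : ℤ) - (N : ℤ) + 1 := Int.toNat_of_nonneg (by omega)
      refine ⟨i0, j, hi01, hi0k, by omega, by omega, ?_⟩
      have hs := hsum i0 (n - 1) hi01 hi0k (by omega) (by omega)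
      have hz : ∑ u ∈ Icc (n + 1 - j) (n - 1), (a u : ℚ) = 0 :=
        Finset.sum_eq_zero fun u hu => by
          rw [mem_Icc] at hu
          have hu0 : a u = 0 := h0 u (by omega) (by omega)
          rw [hu0]; norm_num
      rw [hcast, hs, hz, han]
      have hval : l = A i0 + (n : ℤ) - (k : ℤ) + (i0 : ℤ) + (j : ℤ) - 1 := by omega
      have hvalQ : (l : ℚ) = (A i0 : ℚ) + (n : ℚ) - (k : ℚ) + (i0 : ℚ) + (j : ℚ) - 1 := by
        exact_mod_cast hval
      push_cast
      linarith [hvalQ]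
    · -- family 3
      right
      have hlge : A i0 + (i0 : ℤ) + 2 * (N : ℤ) ≤ l := by omega
      have hi0ltk : i0 < k := by
        rcases lt_or_ge i0 k with h | h
        · exact h
        · exfalso
          have hik : i0 = k := le_antisymm hi0k h
          have hAe : A i0 = A k := by rw [hik]
          have hce : (i0 : ℤ) = (k : ℤ) := by exact_mod_cast hik
          omega
      have hstep' := hstep i0 hi01 hi0ltk
      have hbk := hb (k - i0) (by omega) (by omega)
      have hnmax := hmax (i0 + 1) (by omega) (by omega)
      push_cast at hnmax
      refine ⟨i0, i0 + 1, hi01, by omega, by omega, ?_⟩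
      have hs1 := hsum i0 (n - 1) hi01 hi0k (by omega) (by omega)
      have hs2 := hsum (i0 + 1) (n - 1) (by omega) (by omega) (by omega) (by omega)
      rw [hcast, hcast, hs1, hs2, han]
      have hkey : 2 * l = A i0 + A (i0 + 1) + 2 * (i0 : ℤ) + 2 * (n : ℤ) - 2 * (k : ℤ) := by
        omega
      have hkeyQ : 2 * (l : ℚ) = (A i0 : ℚ) + (A (i0 + 1) : ℚ) + 2 * (i0 : ℚ)
          + 2 * (n : ℚ) - 2 * (k : ℚ) := by exact_mod_cast hkey
      rw [eq_div_iff (by norm_num : (2 : ℚ) ≠ 0)]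
      push_cast
      linarith [hkeyQ]
end

section
/- (Combinatorial content of Corollary 3.14(2), type B, highest weight supported above k.) Let n ≥ 3 and 2 ≤ k ≤ n−1, and let a_1,…,a_n be nonnegative integers with a_u = 0 for all 1 ≤ u ≤ k. Then every integer l with 1 ≤ l ≤ M^B_{k,a} belongs to the step-matrix entry set S^B_{k,a} if and only if a_i ≤ k−1 for all k+1 ≤ i ≤ n−1 and a_n ≤ 2k−1. -/
open Finset

private lemma sum_shiftZ (k : ℕ) (a : ℕ → ℤ) (h0 : ∀ u, 1 ≤ u → u ≤ k → a u = 0)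
    (c m : ℕ) (hc1 : 1 ≤ c) (hc2 : c ≤ k + 1) :
    ∑ u ∈ Icc c m, a u = ∑ u ∈ Icc (k + 1) m, a u := by
  refine (Finset.sum_subset ?_ ?_).symm
  · intro u hu
    simp only [mem_Icc] at hu ⊢
    omega
  · intro u hu hnu
    simp only [mem_Icc] at hu hnu
    exact h0 u (by omega) (by omega)

private lemma chainZ : ∀ (m : ℕ) (f : ℕ → ℤ) (K : ℤ), 1 ≤ m →
    (∀ j, 1 ≤ j → j + 1 ≤ m → f (j + 1) ≤ f j + K) →
    ∀ l : ℤ, f 1 ≤ l → l ≤ f m + K - 1 →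
    ∃ j, 1 ≤ j ∧ j ≤ m ∧ f j ≤ l ∧ l ≤ f j + K - 1
  | 0, _, _, hm, _, _, _, _ => by omega
  | 1, _, _, _, _, _, hl1, hl2 => ⟨1, le_refl _, le_refl _, hl1, hl2⟩
  | (m + 2), f, K, _, hstep, l, hl1, hl2 => by
      by_cases h : l ≤ f (m + 1) + K - 1
      · obtain ⟨j, h1, h2, h3, h4⟩ := chainZ (m + 1) f K (by omega)
          (fun j hj1 hj2 => hstep j hj1 (by omega)) l hl1 h
        exact ⟨j, h1, by omega, h3, h4⟩
      · refine ⟨m + 2, by omega, le_refl _, ?_, hl2⟩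
        have hst : f (m + 2) ≤ f (m + 1) + K := hstep (m + 1) (by omega) (by omega)
        omega

/-- Corollary 3.14(2) for `Bₙ/P(α_k)`: for a highest weight supported above `k`,
every integer in `[1, M^B_{k,a}]` is an entry of the step matrix iff
`a_i ≤ k-1` for `k+1 ≤ i ≤ n-1` and `a_n ≤ 2k-1`. -/
theorem cor_B_lt_support_above (n k : ℕ) (hn : 3 ≤ n) (hk1 : 2 ≤ k) (hkn : k ≤ n - 1)
    (a : ℕ → ℤ) (ha : ∀ u, 1 ≤ u → u ≤ n → 0 ≤ a u)
    (h0 : ∀ u, 1 ≤ u → u ≤ k → a u = 0) :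
    (∀ l : ℤ, 1 ≤ l → l ≤ MB n k a → (l : ℚ) ∈ SB n k a) ↔
      ((∀ i, k + 1 ≤ i → i ≤ n - 1 → a i ≤ (k : ℤ) - 1) ∧ a n ≤ 2 * (k : ℤ) - 1) := by
  set A : ℤ := ∑ u ∈ Icc (k + 1) (n - 1), a u with hA
  set P : ℕ → ℤ := fun j => ∑ u ∈ Icc (k + 1) (k + j - 1), a u with hP
  set Q : ℕ → ℤ := fun j => ∑ u ∈ Icc (n + 1 - j) (n - 1), a u with hQ
  have hPfold : ∀ j, (∑ u ∈ Icc (k + 1) (k + j - 1), a u) = P j := fun j => rfl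
  have hQfold : ∀ j, (∑ u ∈ Icc (n + 1 - j) (n - 1), a u) = Q j := fun j => rfl
  have hAfold : (∑ u ∈ Icc (k + 1) (n - 1), a u) = A := rfl
  have han0 : 0 ≤ a n := ha n (by omega) (by omega)
  have hA0 : 0 ≤ A := Finset.sum_nonneg fun u hu => by
    simp only [mem_Icc] at hu; exact ha u (by omega) (by omega)
  have hP0 : ∀ j, j ≤ n - k → 0 ≤ P j := fun j hj => Finset.sum_nonneg fun u hu => by
    simp only [mem_Icc] at hu; exact ha u (by omega) (by omega)
  have hQ0 : ∀ j, j ≤ n - k → 0 ≤ Q j := fun j hj => Finset.sum_nonneg fun u hu => by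
    simp only [mem_Icc] at hu; exact ha u (by omega) (by omega)
  have hP1 : P 1 = 0 := by
    have h : Icc (k + 1) (k + 1 - 1) = (∅ : Finset ℕ) := Finset.Icc_eq_empty (by omega)
    show (∑ u ∈ Icc (k + 1) (k + 1 - 1), a u) = 0
    rw [h, Finset.sum_empty]
  have hPstep : ∀ j, 1 ≤ j → P (j + 1) = P j + a (k + j) := by
    intro j hj
    show (∑ u ∈ Icc (k + 1) (k + (j + 1) - 1), a u) = _
    rw [show k + (j + 1) - 1 = (k + j - 1) + 1 from by omega,
      Finset.sum_Icc_succ_top (by omega) a, show k + j - 1 + 1 = k + j from by omega]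
  have hPA : P (n - k) = A := by
    show (∑ u ∈ Icc (k + 1) (k + (n - k) - 1), a u) = A
    rw [show k + (n - k) - 1 = n - 1 from by omega]
  have hPmono : ∀ j j', j ≤ j' → j' ≤ n - k → P j ≤ P j' := by
    intro j j' h1 h2
    apply Finset.sum_le_sum_of_subset_of_nonneg (Finset.Icc_subset_Icc le_rfl (by omega))
    intro u hu _
    simp only [mem_Icc] at hu
    exact ha u (by omega) (by omega)
  have hPleA : ∀ j, j ≤ n - k → P j ≤ A := fun j hj => hPA ▸ hPmono j (n - k) hj le_rfl
  have hQ1 : Q 1 = 0 := by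
    have h : Icc (n + 1 - 1) (n - 1) = (∅ : Finset ℕ) := Finset.Icc_eq_empty (by omega)
    show (∑ u ∈ Icc (n + 1 - 1) (n - 1), a u) = 0
    rw [h, Finset.sum_empty]
  have hQstep : ∀ j, 1 ≤ j → j + 1 ≤ n - k → Q (j + 1) = Q j + a (n - j) := by
    intro j h1 h2
    show (∑ u ∈ Icc (n + 1 - (j + 1)) (n - 1), a u) = (∑ u ∈ Icc (n + 1 - j) (n - 1), a u) + _
    rw [show n + 1 - (j + 1) = n - j from by omega,
      ← Finset.add_sum_Ioc_eq_sum_Icc (show n - j ≤ n - 1 from by omega),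
      show n + 1 - j = (n - j) + 1 from by omega, Finset.Icc_add_one_left_eq_Ioc]
    ring
  have hQA : Q (n - k) = A := by
    show (∑ u ∈ Icc (n + 1 - (n - k)) (n - 1), a u) = A
    rw [show n + 1 - (n - k) = k + 1 from by omega]
  have hM : MB n k a = 2 * A + a n + 2 * n - k - 1 := by
    show (∑ u ∈ Icc 1 (n - 1), a u) + (∑ u ∈ Icc (k + 1) (n - 1), a u) + a n
      + 2 * (n : ℤ) - (k : ℤ) - 1 = _
    rw [sum_shiftZ k a h0 1 (n - 1) le_rfl (by omega), hAfold]
    ring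
  have castSum : ∀ c m : ℕ, (∑ u ∈ Icc c m, (a u : ℚ)) = ((∑ u ∈ Icc c m, a u : ℤ) : ℚ) := by
    intro c m; push_cast; ring
  -- membership helpers
  have hmem1 : ∀ (i j : ℕ) (l : ℤ), 1 ≤ i → i ≤ k → 1 ≤ j → j ≤ n - k →
      l = P j + i + j - 1 → (l : ℚ) ∈ SB n k a := by
    intro i j l h1 h2 h3 h4 h5
    simp only [SB, Set.mem_union, Set.mem_setOf_eq]
    refine Or.inl (Or.inl ⟨i, j, h1, h2, h3, h4, ?_⟩)
    rw [castSum, sum_shiftZ k a h0 (k + 1 - i) (k + j - 1) (by omega) (by omega), hPfold]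
    exact_mod_cast congrArg (fun z : ℤ => (z : ℚ)) h5
  have hmem2 : ∀ (i j : ℕ) (l : ℤ), 1 ≤ i → i ≤ k → 1 ≤ j → j ≤ n - k →
      l = A + Q j + a n + n - k + i + j - 1 → (l : ℚ) ∈ SB n k a := by
    intro i j l h1 h2 h3 h4 h5
    simp only [SB, Set.mem_union, Set.mem_setOf_eq]
    refine Or.inl (Or.inr ⟨i, j, h1, h2, h3, h4, ?_⟩)
    rw [castSum (k + 1 - i) (n - 1), castSum (n + 1 - j) (n - 1),
      sum_shiftZ k a h0 (k + 1 - i) (n - 1) (by omega) (by omega), hAfold, hQfold]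
    have h5' : (l : ℚ) = ((A + Q j + a n + n - k + i + j - 1 : ℤ) : ℚ) := by exact_mod_cast h5
    rw [h5']; push_cast; ring
  have hmem3 : ∀ (i j : ℕ) (l : ℤ), 1 ≤ i → i ≤ j → j ≤ k →
      2 * l = 2 * A + a n + i + j + 2 * n - 2 * k - 1 → (l : ℚ) ∈ SB n k a := by
    intro i j l h1 h2 h3 h5
    simp only [SB, Set.mem_union, Set.mem_setOf_eq]
    refine Or.inr ⟨i, j, h1, h2, h3, ?_⟩
    rw [castSum (k + 1 - i) (n - 1), castSum (k + 1 - j) (n - 1),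
      sum_shiftZ k a h0 (k + 1 - i) (n - 1) (by omega) (by omega),
      sum_shiftZ k a h0 (k + 1 - j) (n - 1) (by omega) (by omega), hAfold]
    rw [eq_div_iff (by norm_num : (2 : ℚ) ≠ 0)]
    have h5' : ((2 * l : ℤ) : ℚ) = ((2 * A + a n + i + j + 2 * n - 2 * k - 1 : ℤ) : ℚ) := by
      exact_mod_cast h5
    push_cast at h5'
    linarith
  constructor
  · -- coverage → conditions
    intro hcov
    constructor
    · intro p hp1 hp2
      by_contra hap
      push_neg at hap
      have hj01 : 1 ≤ p - k := by omega
      have hj02 : (p - k) + 1 ≤ n - k := by omega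
      have hPj0 : P ((p - k) + 1) = P (p - k) + a p := by
        rw [hPstep (p - k) hj01, show k + (p - k) = p from by omega]
      have hPj0A : P ((p - k) + 1) ≤ A := hPleA _ hj02
      have hP00 := hP0 (p - k) (by omega)
      set l : ℤ := P (p - k) + (p - k) + k with hl
      have hlA : l ≤ A + n - k - 1 := by omega
      have hmem := hcov l (by omega) (by rw [hM]; omega)
      simp only [SB, Set.mem_union, Set.mem_setOf_eq] at hmem
      rcases hmem with ((⟨i, j, hi1, hi2, hj1, hj2, heq⟩ | ⟨i, j, hi1, hi2, hj1, hj2, heq⟩) |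
        ⟨i, j, hi1, hi2, hj2, heq⟩)
      · rw [castSum, sum_shiftZ k a h0 (k + 1 - i) (k + j - 1) (by omega) (by omega),
          hPfold] at heq
        have hZ : l = P j + i + j - 1 := by exact_mod_cast heq
        rcases le_or_gt j (p - k) with hc | hc
        · have := hPmono j (p - k) hc (by omega)
          omega
        · have := hPmono ((p - k) + 1) j hc (by omega)
          omega
      · rw [castSum (k + 1 - i) (n - 1), castSum (n + 1 - j) (n - 1),
          sum_shiftZ k a h0 (k + 1 - i) (n - 1) (by omega) (by omega), hAfold, hQfold] at heq
        have hZ : l = A + Q j + a n + n - k + i + j - 1 := by exact_mod_cast heq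
        have := hQ0 j (by omega)
        omega
      · rw [castSum (k + 1 - i) (n - 1), castSum (k + 1 - j) (n - 1),
          sum_shiftZ k a h0 (k + 1 - i) (n - 1) (by omega) (by omega),
          sum_shiftZ k a h0 (k + 1 - j) (n - 1) (by omega) (by omega), hAfold] at heq
        rw [eq_div_iff (by norm_num : (2 : ℚ) ≠ 0)] at heq
        have hZ : l * 2 = A + A + a n + i + j + 2 * n - 2 * k - 1 := by exact_mod_cast heq
        omega
    · by_contra han
      push_neg at han
      set l : ℤ := A + n with hl
      have hmem := hcov l (by omega) (by rw [hM]; omega)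
      simp only [SB, Set.mem_union, Set.mem_setOf_eq] at hmem
      rcases hmem with ((⟨i, j, hi1, hi2, hj1, hj2, heq⟩ | ⟨i, j, hi1, hi2, hj1, hj2, heq⟩) |
        ⟨i, j, hi1, hi2, hj2, heq⟩)
      · rw [castSum, sum_shiftZ k a h0 (k + 1 - i) (k + j - 1) (by omega) (by omega),
          hPfold] at heq
        have hZ : l = P j + i + j - 1 := by exact_mod_cast heq
        have := hPleA j hj2
        omega
      · rw [castSum (k + 1 - i) (n - 1), castSum (n + 1 - j) (n - 1),
          sum_shiftZ k a h0 (k + 1 - i) (n - 1) (by omega) (by omega), hAfold, hQfold] at heq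
        have hZ : l = A + Q j + a n + n - k + i + j - 1 := by exact_mod_cast heq
        have := hQ0 j (by omega)
        omega
      · rw [castSum (k + 1 - i) (n - 1), castSum (k + 1 - j) (n - 1),
          sum_shiftZ k a h0 (k + 1 - i) (n - 1) (by omega) (by omega),
          sum_shiftZ k a h0 (k + 1 - j) (n - 1) (by omega) (by omega), hAfold] at heq
        rw [eq_div_iff (by norm_num : (2 : ℚ) ≠ 0)] at heq
        have hZ : l * 2 = A + A + a n + i + j + 2 * n - 2 * k - 1 := by exact_mod_cast heq
        omega
  · rintro ⟨hai, han⟩ l hl1 hl2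
    rw [hM] at hl2
    rcases le_or_gt l (A + n - 1) with hc1 | hc1
    · obtain ⟨j, hj1, hj2, hj3, hj4⟩ := chainZ (n - k) (fun j => P j + j) k (by omega)
        (fun j hja hjb => by
          show P (j + 1) + ((j : ℤ) + 1) ≤ P j + j + k
          rw [hPstep j hja]
          have := hai (k + j) (by omega) (by omega)
          omega)
        l (by show P 1 + (1 : ℤ) ≤ l; rw [hP1]; omega)
        (by show l ≤ P (n - k) + ((n - k : ℕ) : ℤ) + k - 1; rw [hPA]; omega)
      refine hmem1 (l - P j - j + 1).toNat j l ?_ ?_ hj1 hj2 ?_ <;> omega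
    rcases lt_or_ge l (A + a n + (n : ℤ) - k + 1) with hc2 | hc2
    · refine hmem3 ((2 * l - 2 * A - a n - 2 * n + 2 * k + 1).toNat / 2)
        ((2 * l - 2 * A - a n - 2 * n + 2 * k + 1).toNat -
          (2 * l - 2 * A - a n - 2 * n + 2 * k + 1).toNat / 2) l ?_ ?_ ?_ ?_ <;> omega
    · obtain ⟨j, hj1, hj2, hj3, hj4⟩ := chainZ (n - k)
        (fun j => A + a n + (n : ℤ) - k + Q j + j) k (by omega)
        (fun j hja hjb => by
          show A + a n + (n : ℤ) - k + Q (j + 1) + ((j : ℤ) + 1) ≤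
            A + a n + (n : ℤ) - k + Q j + (j : ℤ) + k
          rw [hQstep j hja hjb]
          have := hai (n - j) (by omega) (by omega)
          omega)
        l (by show A + a n + (n : ℤ) - k + Q 1 + 1 ≤ l; rw [hQ1]; omega)
        (by show l ≤ A + a n + (n : ℤ) - k + Q (n - k) + ((n - k : ℕ) : ℤ) + k - 1
            rw [hQA]; omega)
      refine hmem2 (l - (A + a n + (n : ℤ) - k + Q j + j) + 1).toNat j l ?_ ?_ hj1 hj2 ?_ <;>
        omega
end

section
/- (Combinatorial content of Corollary 3.16(1), type C, highest weight supported below k.) Let n ≥ 2 and 2 ≤ k ≤ n, and let a_1,…,a_n be integers with a_u = 0 for all k ≤ u ≤ n and 0 ≤ a_u ≤ 2n−2k+1 for all 1 ≤ u ≤ k−1. Then every integer l with 1 ≤ l ≤ M^C_{k,a} belongs to the step-matrix entry set S^C_{k,a}. -/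
open Finset

/-- Partial sums of `a` from `k+1-i` up to `k-1`. -/
def Apart (k : ℕ) (a : ℕ → ℤ) (i : ℕ) : ℤ := ∑ u ∈ Icc (k + 1 - i) (k - 1), a u

lemma Apart_succ (k : ℕ) (a : ℕ → ℤ) (i : ℕ) (hi1 : 1 ≤ i) (hik : i < k) :
    Apart k a (i + 1) = a (k - i) + Apart k a i := by
  unfold Apart
  rw [show k + 1 - (i + 1) = k - i from by omega]
  rw [show Icc (k - i) (k - 1) = insert (k - i) (Icc (k + 1 - i) (k - 1)) from by
        ext x; simp only [mem_Icc, mem_insert]; omega]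
  rw [Finset.sum_insert (by simp only [mem_Icc]; omega)]

lemma Apart_one (k : ℕ) (a : ℕ → ℤ) (hk : 1 ≤ k) : Apart k a 1 = 0 := by
  unfold Apart
  rw [Finset.Icc_eq_empty (by omega)]
  exact Finset.sum_empty

/-- Corollary 3.16(1) for `Cₙ/P(α_k)`: if the highest weight is supported below `k`
with coefficients at most `2n-2k+1`, then every integer in `[1, M^C_{k,a}]` is an
entry of the step matrix. -/
theorem cor_C_support_below (n k : ℕ) (hn : 2 ≤ n) (hk1 : 2 ≤ k) (hkn : k ≤ n)
    (a : ℕ → ℤ) (h0 : ∀ u, k ≤ u → u ≤ n → a u = 0)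
    (hb : ∀ u, 1 ≤ u → u ≤ k - 1 →
      0 ≤ a u ∧ a u ≤ 2 * (n : ℤ) - 2 * (k : ℤ) + 1) :
    ∀ l : ℤ, 1 ≤ l → l ≤ MC n k a → (l : ℚ) ∈ SC n k a := by
  have han : a n = 0 := h0 n hkn le_rfl
  have hsum1 : ∀ i j : ℕ, 1 ≤ j → j ≤ n - k →
      ∑ u ∈ Icc (k + 1 - i) (k + j - 1), a u = Apart k a i := by
    intro i j hj1 hj2
    refine (Finset.sum_subset (Finset.Icc_subset_Icc le_rfl (by omega)) ?_).symm
    intro u hu hnu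
    simp only [mem_Icc, not_and, not_le] at hu hnu
    exact h0 u (by omega) (by omega)
  have hsum2 : ∀ i : ℕ, ∑ u ∈ Icc (k + 1 - i) (n - 1), a u = Apart k a i := by
    intro i
    refine (Finset.sum_subset (Finset.Icc_subset_Icc le_rfl (by omega)) ?_).symm
    intro u hu hnu
    simp only [mem_Icc, not_and, not_le] at hu hnu
    exact h0 u (by omega) (by omega)
  have hq1 : ∀ i j : ℕ, 1 ≤ j → j ≤ n - k →
      ∑ u ∈ Icc (k + 1 - i) (k + j - 1), (a u : ℚ) = (Apart k a i : ℚ) := by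
    intro i j hj1 hj2
    rw [← hsum1 i j hj1 hj2]; push_cast; ring
  have hq2 : ∀ i : ℕ,
      ∑ u ∈ Icc (k + 1 - i) (n - 1), (a u : ℚ) = (Apart k a i : ℚ) := by
    intro i
    rw [← hsum2 i]; push_cast; ring
  have hq3 : ∀ j : ℕ, 1 ≤ j → j ≤ n - k →
      ∑ u ∈ Icc (n + 1 - j) (n - 1), (a u : ℚ) = 0 := by
    intro j hj1 hj2
    refine Finset.sum_eq_zero fun u hu => ?_
    simp only [mem_Icc] at hu
    rw [h0 u (by omega) (by omega)]; norm_num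
  -- membership helpers
  have mem1 : ∀ (i j : ℕ) (m : ℤ), 1 ≤ i → i ≤ k → 1 ≤ j → j ≤ n - k →
      m = Apart k a i + i + j - 1 → (m : ℚ) ∈ SC n k a := by
    intro i j m hi1 hi2 hj1 hj2 hval
    simp only [SC, Set.mem_union, Set.mem_setOf_eq]
    refine Or.inl (Or.inl ⟨i, j, hi1, hi2, hj1, hj2, ?_⟩)
    rw [hq1 i j hj1 hj2]
    exact_mod_cast hval
  have mem2 : ∀ (i j : ℕ) (m : ℤ), 1 ≤ i → i ≤ k → 1 ≤ j → j ≤ n - k →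
      m = Apart k a i + (n : ℤ) - (k : ℤ) + i + j → (m : ℚ) ∈ SC n k a := by
    intro i j m hi1 hi2 hj1 hj2 hval
    have h' : (m : ℚ) = (Apart k a i : ℚ) + n - k + i + j := by exact_mod_cast hval
    simp only [SC, Set.mem_union, Set.mem_setOf_eq]
    refine Or.inl (Or.inr ⟨i, j, hi1, hi2, hj1, hj2, ?_⟩)
    rw [hq2 i, hq3 j hj1 hj2, han]
    push_cast
    linarith [h']
  have mem3 : ∀ (i j : ℕ) (m : ℤ), 1 ≤ i → i ≤ j → j ≤ k →
      2 * m = Apart k a i + Apart k a j + i + j + 2 * (n : ℤ) - 2 * (k : ℤ) →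
      (m : ℚ) ∈ SC n k a := by
    intro i j m hi1 hij hjk hval
    have h' : 2 * (m : ℚ)
        = (Apart k a i : ℚ) + (Apart k a j : ℚ) + i + j + 2 * n - 2 * k := by
      exact_mod_cast hval
    simp only [SC, Set.mem_union, Set.mem_setOf_eq]
    refine Or.inr ⟨i, j, hi1, hij, hjk, ?_⟩
    rw [hq2 i, hq2 j, han, eq_div_iff (by norm_num : (2 : ℚ) ≠ 0)]
    push_cast
    linarith [h']
  have hinterval : ∀ i : ℕ, 1 ≤ i → i ≤ k → ∀ m : ℤ,
      Apart k a i + i ≤ m → m ≤ Apart k a i + i + 2 * ((n : ℤ) - k) →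
      (m : ℚ) ∈ SC n k a := by
    intro i hi1 hik m hm1 hm2
    rcases lt_trichotomy m (Apart k a i + i + ((n : ℤ) - k)) with h | h | h
    · exact mem1 i ((m - (Apart k a i + i)).toNat + 1) m hi1 hik (by omega)
        (by omega) (by omega)
    · exact mem3 i i m hi1 le_rfl hik (by omega)
    · exact mem2 i ((m - (Apart k a i + i) - ((n : ℤ) - k)).toNat) m hi1 hik
        (by omega) (by omega) (by omega)
  have main : ∀ i : ℕ, 1 ≤ i → i ≤ k → ∀ m : ℤ, 1 ≤ m →
      m ≤ Apart k a i + i + 2 * ((n : ℤ) - k) → (m : ℚ) ∈ SC n k a := by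
    intro i hi1
    induction i, hi1 using Nat.le_induction with
    | base =>
      intro hk m hm1 hm2
      have h1 : Apart k a 1 = 0 := Apart_one k a (by omega)
      exact hinterval 1 le_rfl hk m (by omega) (by omega)
    | succ i hi ih =>
      intro hk m hm1 hm2
      have hik : i < k := by omega
      have hstep := Apart_succ k a i hi hik
      have hbnd := hb (k - i) (by omega) (by omega)
      by_cases hcase : m ≤ Apart k a i + i + 2 * ((n : ℤ) - k)
      · exact ih (by omega) m hm1 hcase
      · by_cases hcase2 : Apart k a (i + 1) + (i + 1 : ℕ) ≤ m
        · exact hinterval (i + 1) (by omega) hk m hcase2 (by push_cast at hm2 ⊢; omega)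
        · exact mem3 i (i + 1) m hi (by omega) hk (by push_cast at hcase2 hm2 ⊢; omega)
  intro l hl1 hl2
  have hMC : MC n k a = Apart k a k + k + 2 * ((n : ℤ) - k) := by
    unfold MC Apart
    rw [show k + 1 - k = 1 from by omega]
    have e1 : ∑ u ∈ Icc 1 (n - 1), a u = ∑ u ∈ Icc 1 (k - 1), a u := by
      refine (Finset.sum_subset (Finset.Icc_subset_Icc le_rfl (by omega)) ?_).symm
      intro u hu hnu
      simp only [mem_Icc, not_and, not_le] at hu hnu
      exact h0 u (by omega) (by omega)
    have e2 : ∑ u ∈ Icc (k + 1) (n - 1), a u = 0 :=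
      Finset.sum_eq_zero fun u hu => by
        simp only [mem_Icc] at hu; exact h0 u (by omega) (by omega)
    rw [e1, e2, han]; ring
  exact main k (by omega) le_rfl l hl1 (by rw [← hMC]; exact hl2)
end
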